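/- For every natural number n, every integer r with r ≥ 2, and all integers m and t, F_r·∑_{j=1}^n (−1)^{r(n−j)}·F_{m−r}^{n−j}·F_m^{j−1}·(∏_{i=1}^{r−1} G_{j+t+i})·G_{j+t+m} = F_m^n·∏_{i=1}^{r} G_{n+t+i} − (−1)^{r·n}·F_{m−r}^n·∏_{i=1}^{r} G_{t+i}. -/

import Mathlib

theorem add_law (F : ℤ → ℤ) (hF0 : F 0 = 0) (hF1 : F 1 = 1)
    (hF : ∀ k : ℤ, F (k + 2) = F (k + 1) + F k)
    (G : ℤ → ℤ) (hG : ∀ k : ℤ, G (k + 2) = G (k + 1) + G k)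
    (m k : ℤ) : G (k + m) = F m * G (k + 1) + F (m - 1) * G k := by
  have hFm1 : F (-1) = 1 := by have h := hF (-1); norm_num [hF0, hF1] at h; linarith
  have key : ∀ m : ℤ, (G (k + m) = F m * G (k + 1) + F (m - 1) * G k) ∧
      (G (k + m + 1) = F (m + 1) * G (k + 1) + F m * G k) := by
    intro m
    induction m using Int.induction_on with
    | zero =>
      constructor
      · norm_num [hF0, hFm1]
      · norm_num [hF0, hF1]
    | succ i ih =>
      obtain ⟨h1, h2⟩ := ih
      constructor
      · rw [show (k + ((i:ℤ)+1)) = (k + i + 1) by ring, show ((i:ℤ) + 1 - 1) = (i:ℤ) by ring]; exact h2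
      · have hg := hG (k + i)
        have hfb := hF ((i:ℤ) - 1)
        rw [show ((i:ℤ)-1+2) = ((i:ℤ)+1) by ring, show ((i:ℤ)-1+1) = (i:ℤ) by ring] at hfb
        rw [show (k + ((i:ℤ)+1) + 1) = (k + i + 2) by ring, hg,
          show ((i:ℤ)+1+1) = ((i:ℤ)+2) by ring, hF (i:ℤ)]
        linear_combination h1 + h2 - G k * hfb
    | pred i ih =>
      obtain ⟨h1, h2⟩ := ih
      constructor
      · have hg := hG (k + (-(i:ℤ) - 1))
        have hf := hF (-(i:ℤ) - 1)
        have hf2 := hF (-(i:ℤ) - 2)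
        rw [show (k + (-(i:ℤ)-1) + 2) = (k + -(i:ℤ) + 1) by ring,
          show (k + (-(i:ℤ)-1) + 1) = (k + -(i:ℤ)) by ring] at hg
        rw [show (-(i:ℤ)-1+2) = (-(i:ℤ)+1) by ring, show (-(i:ℤ)-1+1) = (-(i:ℤ)) by ring] at hf
        rw [show (-(i:ℤ)-2+2) = (-(i:ℤ)) by ring, show (-(i:ℤ)-2+1) = (-(i:ℤ)-1) by ring] at hf2
        rw [show (-(i:ℤ)-1-1) = (-(i:ℤ)-2) by ring]
        linear_combination h2 - h1 - hg + G (k+1) * hf + G k * hf2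
      · rw [show (k + (-(i:ℤ)-1) + 1) = (k + -(i:ℤ)) by ring,
          show (-(i:ℤ)-1+1) = (-(i:ℤ)) by ring]
        exact h1
  exact (key m).1

theorem key_id (F : ℤ → ℤ) (hF0 : F 0 = 0) (hF1 : F 1 = 1)
    (hF : ∀ k : ℤ, F (k + 2) = F (k + 1) + F k)
    (G : ℤ → ℤ) (hG : ∀ k : ℤ, G (k + 2) = G (k + 1) + G k)
    (AL : ∀ m k : ℤ, G (k + m) = F m * G (k + 1) + F (m - 1) * G k)
    (m : ℤ) :
    ∀ (r : ℕ) (k : ℤ), F m * G (k + (r:ℤ)) - (-1:ℤ)^r * F (m - (r:ℤ)) * G k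
      = F (r:ℤ) * G (k + m) := by
  have key : ∀ (r : ℕ), (∀ k : ℤ, F m * G (k + (r:ℤ)) - (-1:ℤ)^r * F (m - (r:ℤ)) * G k
      = F (r:ℤ) * G (k + m)) ∧ (∀ k : ℤ, F m * G (k + ((r:ℤ)+1)) - (-1:ℤ)^(r+1) * F (m - ((r:ℤ)+1)) * G k
      = F ((r:ℤ)+1) * G (k + m)) := by
    intro r
    induction r with
    | zero =>
      constructor
      · intro k; norm_num [hF0]
      · intro k
        norm_num [hF1]
        linear_combination (AL m k).symm
    | succ r ih =>
      obtain ⟨h1, h2⟩ := ih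
      constructor
      · intro k
        have := h2 k
        push_cast at this ⊢
        linear_combination this
      · intro k
        have e1 := h1 k
        have e2 := h2 k
        have hg := hG (k + (r:ℤ))
        have hfr := hF ((r:ℤ))
        have hfm := hF (m - (r:ℤ) - 2)
        rw [show (m - (r:ℤ) - 2 + 2) = (m - (r:ℤ)) by ring,
          show (m - (r:ℤ) - 2 + 1) = (m - (r:ℤ) - 1) by ring] at hfm
        push_cast
        rw [show (k + ((r:ℤ) + 1 + 1)) = (k + (r:ℤ) + 2) by ring, hg,
          show ((r:ℤ) + 1 + 1) = ((r:ℤ) + 2) by ring, hfr,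
          show (k + (r:ℤ) + 1) = (k + ((r:ℤ)+1)) by ring,
          show (m - ((r:ℤ) + 2)) = (m - (r:ℤ) - 2) by ring]
        rw [show (m - ((r:ℤ)+1)) = (m - (r:ℤ) - 1) by ring] at e2
        rw [pow_succ, pow_succ]
        linear_combination e1 + e2 + (-1:ℤ)^r * G k * hfm
  intro r k
  exact (key r).1 k


theorem general_product_sum (F : ℤ → ℤ) (hF0 : F 0 = 0) (hF1 : F 1 = 1)
    (hF : ∀ k : ℤ, F (k + 2) = F (k + 1) + F k)
    (G : ℤ → ℤ) (hG : ∀ k : ℤ, G (k + 2) = G (k + 1) + G k)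
    (n : ℕ) (r : ℕ) (hr : 2 ≤ r) (m t : ℤ) :
    F (r : ℤ) * ∑ j ∈ Finset.Icc 1 n,
        (-1 : ℤ) ^ (r * (n - j)) * F (m - (r : ℤ)) ^ (n - j) * F m ^ (j - 1) *
          (∏ i ∈ Finset.Icc 1 (r - 1), G ((j : ℤ) + t + (i : ℤ))) * G ((j : ℤ) + t + m) =
      F m ^ n * ∏ i ∈ Finset.Icc 1 r, G ((n : ℤ) + t + (i : ℤ)) -
        (-1 : ℤ) ^ (r * n) * F (m - (r : ℤ)) ^ n * ∏ i ∈ Finset.Icc 1 r, G (t + (i : ℤ)) := by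
  have AL := add_law F hF0 hF1 hF G hG
  have KEY := key_id F hF0 hF1 hF G hG (fun m k => AL m k) m
  obtain ⟨s, rfl⟩ : ∃ s, r = s + 1 := ⟨r - 1, by omega⟩
  have hs : 1 ≤ s := by omega
  simp only [Nat.add_sub_cancel]
  set A : ℕ → ℤ := fun j => (-1:ℤ)^((s+1)*(n-j)) * F (m - ((s+1:ℕ):ℤ))^(n-j) * F m ^ j *
      ∏ l ∈ Finset.Icc 1 (s+1), G ((j:ℤ) + t + (l:ℤ)) with hA
  have hterm : ∀ i ∈ Finset.range n,
      F ((s+1:ℕ):ℤ) * ((-1 : ℤ) ^ ((s+1) * (n - (1+i))) * F (m - ((s+1:ℕ):ℤ)) ^ (n - (1+i)) *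
        F m ^ ((1+i) - 1) *
        (∏ l ∈ Finset.Icc 1 s, G (((1+i:ℕ):ℤ) + t + (l:ℤ))) * G (((1+i:ℕ):ℤ) + t + m))
        = A (i+1) - A i := by
    intro i hi
    rw [Finset.mem_range] at hi
    set k : ℤ := (i:ℤ) + 1 + t with hk
    have hQ : ∏ l ∈ Finset.Icc 1 s, G (((1+i:ℕ):ℤ) + t + (l:ℤ))
        = ∏ l ∈ Finset.Icc 1 s, G (k + (l:ℤ)) := by
      refine Finset.prod_congr rfl fun l _ => ?_
      congr 1; push_cast; try ring
    have hP1 : ∏ l ∈ Finset.Icc 1 (s+1), G (((i+1:ℕ):ℤ) + t + (l:ℤ))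
        = (∏ l ∈ Finset.Icc 1 s, G (k + (l:ℤ))) * G (k + ((s+1:ℕ):ℤ)) := by
      rw [Finset.prod_Icc_succ_top (by omega)]
      congr 1
      all_goals first
        | (refine Finset.prod_congr rfl fun l _ => ?_; congr 1; push_cast; try ring)
        | (congr 1; push_cast; try ring)
    have hP0 : ∏ l ∈ Finset.Icc 1 (s+1), G (((i:ℕ):ℤ) + t + (l:ℤ))
        = G k * ∏ l ∈ Finset.Icc 1 s, G (k + (l:ℤ)) := by
      rw [← Finset.Ico_add_one_right_eq_Icc, Finset.prod_Ico_eq_prod_range]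
      rw [show (s+1+1-1) = s+1 from by omega, Finset.prod_range_succ']
      rw [mul_comm]
      congr 1
      all_goals first
        | (rw [← Finset.Ico_add_one_right_eq_Icc, Finset.prod_Ico_eq_prod_range,
            show (s+1-1) = s from by omega]
           refine Finset.prod_congr rfl fun l _ => ?_
           congr 1; push_cast; try ring)
        | (show G _ = G k; congr 1; push_cast; try ring)
    have hkey := KEY (s+1) k
    have he1 : n - i = (n - (1+i)) + 1 := by omega
    have he2 : (1+i) - 1 = i := by omega
    have he3 : n - (i+1) = n - (1+i) := by omega
    have hGm : (((1+i:ℕ):ℤ) + t + m) = k + m := by rw [hk]; push_cast; ring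
    simp only [hA, he1, he2, he3, hP1, hP0, hGm]
    rw [show (s+1) * ((n - (1+i)) + 1) = (s+1) * (n - (1+i)) + (s+1) from by ring,
      pow_add, pow_succ, hQ]
    push_cast at hkey ⊢
    linear_combination (-((-1:ℤ)^((s+1)*(n-(1+i))) * F (m - ((s:ℤ)+1))^(n-(1+i)) * F m ^ i *
      (∏ l ∈ Finset.Icc 1 s, G (k + (l:ℤ))))) * hkey
  rw [← Finset.Ico_add_one_right_eq_Icc, Finset.sum_Ico_eq_sum_range,
    show (n+1-1) = n from by omega, Finset.mul_sum,
    Finset.sum_congr rfl hterm, Finset.sum_range_sub A n]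
  have hA0 : A 0 = (-1:ℤ)^((s+1)*n) * F (m - ((s+1:ℕ):ℤ))^n *
      ∏ l ∈ Finset.Icc 1 (s+1), G (t + (l:ℤ)) := by
    simp only [hA]
    rw [Nat.sub_zero, pow_zero, mul_one]
    have hp : (∏ l ∈ Finset.Icc 1 (s+1), G (((0:ℕ):ℤ) + t + (l:ℤ)))
        = ∏ l ∈ Finset.Icc 1 (s+1), G (t + (l:ℤ)) :=
      Finset.prod_congr rfl fun l _ => by norm_num
    rw [hp]
  have hAn : A n = F m ^ n * ∏ l ∈ Finset.Icc 1 (s+1), G ((n:ℤ) + t + (l:ℤ)) := by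
    simp only [hA, Nat.sub_self, Nat.mul_zero, pow_zero, one_mul, mul_one]
  rw [hA0, hAn]
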